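/- If n = t(q^m−1)/(q−1) with 0 < t < q/2, then the quantities n' = 2nq^{m_1}, k = m+m_1, d = 2nq^{m_1−1}(q−1) satisfy the Griesmer bound with equality: Σ_{i=0}^{k−1} ⌈d/q^i⌉ = n'. -/

import Mathlib

/-- The Griesmer-bound computation: if `n = t(q^m−1)/(q−1)` with `0 < t < q/2`,
then `n' = 2nq^{m_1}`, `k = m + m_1`, `d = 2nq^{m_1−1}(q−1)` satisfy
`∑_{i=0}^{k−1} ⌈d/q^i⌉ = n'`. -/
theorem stmt11 (p s q m m1 n t : ℕ) (hp : p.Prime) (hqp : q = p ^ s) (hs : 0 < s)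
    (hm : 0 < m) (hm1 : 0 < m1) (ht : 0 < t) (ht2 : 2 * t < q)
    (hn : n * (q - 1) = t * (q ^ m - 1)) :
    ∑ i ∈ Finset.range (m + m1),
        ⌈((2 * n * q ^ (m1 - 1) * (q - 1) : ℕ) : ℚ) / (q : ℚ) ^ i⌉ =
      ((2 * n * q ^ m1 : ℕ) : ℤ) := by
  have hq2 : 2 ≤ q := by omega
  have hq0 : 0 < q := by omega
  have hqQ : (0:ℚ) < (q:ℚ) := by exact_mod_cast hq0
  have hqm1 : 1 ≤ q ^ m := Nat.one_le_pow _ _ hq0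
  set D : ℕ := 2 * n * q ^ (m1 - 1) * (q - 1) with hD
  have hDt : D = 2 * t * (q ^ m - 1) * q ^ (m1 - 1) := by
    have : D = 2 * (n * (q - 1)) * q ^ (m1 - 1) := by rw [hD]; ring
    rw [this, hn]; ring
  -- part A: i < m1
  have hA : ∀ i < m1, ⌈((D:ℕ):ℚ)/(q:ℚ)^i⌉ = ((2*t*(q^m-1)*q^(m1-1-i) : ℕ) : ℤ) := by
    intro i hi
    have hsplit : q ^ (m1-1) = q ^ (m1-1-i) * q ^ i := by
      rw [← pow_add]; congr 1; omega
    have hDeq : D = (2*t*(q^m-1)*q^(m1-1-i)) * q^i := by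
      rw [hDt, hsplit]; ring
    have hx : ((D:ℚ))/(q:ℚ)^i = ((2*t*(q^m-1)*q^(m1-1-i) : ℕ) : ℚ) := by
      rw [hDeq, Nat.cast_mul, Nat.cast_pow,
        mul_div_cancel_right₀ _ (by positivity : ((q:ℚ))^i ≠ 0)]
    rw [hx, Int.ceil_natCast]
  -- part B: i = m1 + k, k < m
  have hB : ∀ k < m, ⌈((D:ℕ):ℚ)/(q:ℚ)^(m1+k)⌉ = ((2*t*q^(m-1-k) : ℕ) : ℤ) := by
    intro k hk
    have hE : (D:ℚ) = 2*t*((q:ℚ)^m - 1) * (q:ℚ)^(m1-1) := by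
      rw [hDt]; push_cast [Nat.cast_sub hqm1]; ring
    have hpow1 : (q:ℚ)^(m1+k) = (q:ℚ)^(m1-1) * (q:ℚ)^(k+1) := by
      rw [← pow_add]; congr 1; omega
    have hpow2 : (q:ℚ)^(m-1-k) * (q:ℚ)^(k+1) = (q:ℚ)^m := by
      rw [← pow_add]; congr 1; omega
    have hxe : (D:ℚ)/(q:ℚ)^(m1+k) = (2*t*((q:ℚ)^m - 1)) / (q:ℚ)^(k+1) := by
      rw [hE, hpow1]
      field_simp
    rw [hxe, Int.ceil_eq_iff]
    have hz : ((((2*t*q^(m-1-k) : ℕ) : ℤ)):ℚ) = 2*t*(q:ℚ)^(m-1-k) := by push_cast; ring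
    have h2t : (2*t : ℚ) < (q:ℚ)^(k+1) := by
      have : (2*t:ℚ) < (q:ℚ) := by exact_mod_cast ht2
      calc (2*t:ℚ) < (q:ℚ) := this
        _ ≤ (q:ℚ)^(k+1) := le_self_pow₀ (by exact_mod_cast hq0) (by omega)
    have hqk : (0:ℚ) < (q:ℚ)^(k+1) := by positivity
    have ht0 : (0:ℚ) < (t:ℚ) := by exact_mod_cast ht
    constructor
    · rw [hz, lt_div_iff₀ hqk]
      have : 2*(t:ℚ)*(q:ℚ)^(m-1-k)*(q:ℚ)^(k+1) = 2*t*(q:ℚ)^m := by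
        rw [mul_assoc, mul_assoc, hpow2]; ring
      nlinarith [this]
    · rw [hz, div_le_iff₀ hqk]
      have : 2*(t:ℚ)*(q:ℚ)^(m-1-k)*(q:ℚ)^(k+1) = 2*t*(q:ℚ)^m := by
        rw [mul_assoc, mul_assoc, hpow2]; ring
      nlinarith [hqk, ht0]
  -- assemble
  have hsplit : (Finset.range (m + m1)).sum (fun i => ⌈((D:ℕ):ℚ)/(q:ℚ)^i⌉)
      = (∑ i ∈ Finset.range m1, ⌈((D:ℕ):ℚ)/(q:ℚ)^i⌉)
        + ∑ k ∈ Finset.range m, ⌈((D:ℕ):ℚ)/(q:ℚ)^(m1+k)⌉ := by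
    rw [show m + m1 = m1 + m by omega, Finset.sum_range_add]
  rw [hsplit]
  rw [Finset.sum_congr rfl (fun i hi => hA i (Finset.mem_range.mp hi)),
    Finset.sum_congr rfl (fun k hk => hB k (Finset.mem_range.mp hk))]
  -- reflect sums
  have hS1 : (∑ i ∈ Finset.range m1, ((2*t*(q^m-1)*q^(m1-1-i) : ℕ) : ℤ))
      = ∑ i ∈ Finset.range m1, ((2*t*(q^m-1)*q^i : ℕ) : ℤ) := by
    exact Finset.sum_range_reflect (fun i => ((2*t*(q^m-1)*q^i : ℕ) : ℤ)) m1
  have hS2 : (∑ k ∈ Finset.range m, ((2*t*q^(m-1-k) : ℕ) : ℤ))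
      = ∑ k ∈ Finset.range m, ((2*t*q^k : ℕ) : ℤ) := by
    exact Finset.sum_range_reflect (fun k => ((2*t*q^k : ℕ) : ℤ)) m
  rw [hS1, hS2]
  have hnZ : (n:ℤ) * ((q:ℤ) - 1) = (t:ℤ) * ((q:ℤ)^m - 1) := by
    have := hn
    have h1 : 1 ≤ q := by omega
    zify [h1, hqm1] at this
    linarith [this]
  have hq1 : ((q:ℤ) - 1) ≠ 0 := by
    have : (2:ℤ) ≤ (q:ℤ) := by exact_mod_cast hq2
    omega
  apply mul_right_cancel₀ hq1
  have hgeom1 : (∑ i ∈ Finset.range m1, (q:ℤ)^i) * ((q:ℤ) - 1) = (q:ℤ)^m1 - 1 :=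
    geom_sum_mul _ _
  have hgeom2 : (∑ i ∈ Finset.range m, (q:ℤ)^i) * ((q:ℤ) - 1) = (q:ℤ)^m - 1 :=
    geom_sum_mul _ _
  have hc1 : (∑ i ∈ Finset.range m1, ((2*t*(q^m-1)*q^i : ℕ) : ℤ))
      = 2*t*((q:ℤ)^m-1) * ∑ i ∈ Finset.range m1, (q:ℤ)^i := by
    rw [Finset.mul_sum]
    refine Finset.sum_congr rfl fun i _ => ?_
    push_cast [Nat.cast_sub hqm1]; ring
  have hc2 : (∑ k ∈ Finset.range m, ((2*t*q^k : ℕ) : ℤ))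
      = 2*t * ∑ k ∈ Finset.range m, (q:ℤ)^k := by
    rw [Finset.mul_sum]
    refine Finset.sum_congr rfl fun k _ => ?_
    push_cast; ring
  rw [hc1, hc2]
  have hR : ((2 * n * q ^ m1 : ℕ) : ℤ) = 2 * n * (q:ℤ)^m1 := by push_cast; ring
  rw [hR]
  linear_combination (2*(t:ℤ)*((q:ℤ)^m-1))*hgeom1 + 2*(t:ℤ)*hgeom2 - 2*(q:ℤ)^m1*hnZ
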